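/- Uniform fourth-moment bound for add-cube differences: let P_n, P'_n be independent Poisson processes on [0,1]^d with intensity nκ where κ is a bounded density, and let z_j be lattice points with Q(z_j) = (−1/2,1/2]^d + z_j intersecting [0,n^{1/d}]^d. Then for every fixed (r,s), sup_{n,j} E[ |β_q^{r,s}(K(n^{1/d}P_n ∪ (n^{1/d}P'_n ∩ Q(z_j)))) − β_q^{r,s}(K(n^{1/d}P_n))|^4 ] < ∞. -/

import Mathlib

set_option autoImplicit false

open Submodule

/-- An abstract simplicial complex on vertex type `V`: a collection of finite nonempty
subsets closed under taking nonempty subsets. -/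
def IsComplex {V : Type*} (K : Set (Finset V)) : Prop :=
  ∀ σ ∈ K, σ.Nonempty ∧ ∀ τ : Finset V, τ ⊆ σ → τ.Nonempty → τ ∈ K

/-- The space of all `F₂`-chains on the vertex type `V`: the free `F₂`-vector space on
all finite subsets of `V`. -/
abbrev Chain (V : Type*) := Finset V →₀ ZMod 2

/-- The boundary map with `F₂`-coefficients, sending a simplex to the sum of its
codimension-one faces. -/
noncomputable def bdry (V : Type*) : Chain V →ₗ[ZMod 2] Chain V := by
  classical
  exact Finsupp.lsum (ZMod 2) fun σ =>
    LinearMap.toSpanSingleton (ZMod 2) (Chain V) (∑ x ∈ σ, Finsupp.single (σ.erase x) 1)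

/-- `C_q(K)`: the chain group of a complex `K`, the `F₂`-span of its `q`-simplices,
viewed as a subspace of the free `F₂`-vector space on all finite vertex sets. -/
noncomputable def chainGroup {V : Type*} (K : Set (Finset V)) (q : ℕ) :
    Submodule (ZMod 2) (Chain V) :=
  Submodule.span (ZMod 2)
    {c | ∃ σ ∈ K, σ.card = q + 1 ∧ c = Finsupp.single σ (1 : ZMod 2)}

/-- `Z_q(K)`: the cycle group of a complex `K`. -/
noncomputable def cycleGroup {V : Type*} (K : Set (Finset V)) (q : ℕ) :
    Submodule (ZMod 2) (Chain V) :=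
  chainGroup K q ⊓ LinearMap.ker (bdry V)

/-- `B_q(K)`: the boundary group of a complex `K`. -/
noncomputable def boundaryGroup {V : Type*} (K : Set (Finset V)) (q : ℕ) :
    Submodule (ZMod 2) (Chain V) :=
  Submodule.map (bdry V) (chainGroup K (q + 1))

/-- The `(r,s)`-persistent Betti number of a filtration
`Kf`: `dim (Z_q(K_r) / (Z_q(K_r) ∩ B_q(K_s)))`. -/
noncomputable def pBetti {V : Type*} (Kf : ℝ → Set (Finset V)) (q : ℕ) (r s : ℝ) : ℕ :=
  Module.finrank (ZMod 2)
    (↥(cycleGroup (Kf r) q) ⧸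
      (Submodule.comap (cycleGroup (Kf r) q).subtype (boundaryGroup (Kf s) q) :
        Submodule (ZMod 2) ↥(cycleGroup (Kf r) q)))

/-- Points of `ℝ^d`. -/
abbrev Pt (d : ℕ) := EuclideanSpace ℝ (Fin d)

/-- The Čech complex at scale `r` of a set `S ⊆ ℝ^d`: all finite nonempty `σ ⊆ S` whose
closed `r`-balls have a common point. -/
def cechCx (d : ℕ) (r : ℝ) (S : Set (Pt d)) : Set (Finset (Pt d)) :=
  {σ | ↑σ ⊆ S ∧ σ.Nonempty ∧ (⋂ x ∈ (σ : Set (Pt d)), Metric.closedBall x r).Nonempty}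

/-- The Vietoris–Rips complex at scale `r` of a set `S ⊆ ℝ^d`: all finite nonempty
`σ ⊆ S` of diameter at most `r`. -/
def ripsCx (d : ℕ) (r : ℝ) (S : Set (Pt d)) : Set (Finset (Pt d)) :=
  {σ | ↑σ ⊆ S ∧ σ.Nonempty ∧ Metric.diam (σ : Set (Pt d)) ≤ r}

/-- The `(r,s)`-persistent Betti number of the filtration `Kx` (Čech or Rips) built on the
point set `S ⊆ ℝ^d`. -/
noncomputable def pBettiPts {d : ℕ} (Kx : ℝ → Set (Pt d) → Set (Finset (Pt d)))
    (q : ℕ) (r s : ℝ) (S : Set (Pt d)) : ℕ :=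
  pBetti (fun t => Kx t S) q r s

open MeasureTheory in
/-- A point process `P` on `ℝ^d` is a Poisson point process with intensity function `f`
(w.r.t. the probability measure `μ`) if it is almost surely locally finite, the number of
its points in a region `A` is Poisson distributed with mean `∫ x in A, f x`, and the
point counts in disjoint regions are independent. -/
structure IsPoissonPP {Ω : Type*} [MeasurableSpace Ω] (μ : Measure Ω) {d : ℕ}
    (f : Pt d → ℝ) (P : Ω → Set (Pt d)) : Prop where
  locallyFinite : ∀ᵐ ω ∂μ, ∀ C : Set (Pt d), IsCompact C → (P ω ∩ C).Finite
  counts : ∀ A : Set (Pt d), MeasurableSet A → IntegrableOn f A volume →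
    ∀ n : ℕ, μ {ω | (P ω ∩ A).ncard = n ∧ (P ω ∩ A).Finite} =
      ENNReal.ofReal (Real.exp (-(∫ x in A, f x)) * (∫ x in A, f x) ^ n / n.factorial)
  indep : ∀ A B : Set (Pt d), MeasurableSet A → MeasurableSet B → Disjoint A B →
    ∀ sA sB : Set ℕ,
      μ ({ω | (P ω ∩ A).ncard ∈ sA} ∩ {ω | (P ω ∩ B).ncard ∈ sB}) =
        μ {ω | (P ω ∩ A).ncard ∈ sA} * μ {ω | (P ω ∩ B).ncard ∈ sB}

open MeasureTheory in
/-- Two point processes `P`, `P'` are independent if all their point counts are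
independent. -/
def IndepPP {Ω : Type*} [MeasurableSpace Ω] (μ : Measure Ω) {d : ℕ}
    (P P' : Ω → Set (Pt d)) : Prop :=
  ∀ A B : Set (Pt d), MeasurableSet A → MeasurableSet B → ∀ sA sB : Set ℕ,
    μ ({ω | (P ω ∩ A).ncard ∈ sA} ∩ {ω | (P' ω ∩ B).ncard ∈ sB}) =
      μ {ω | (P ω ∩ A).ncard ∈ sA} * μ {ω | (P' ω ∩ B).ncard ∈ sB}

/-- The centered cube `[-c/2, c/2]^d`. -/
def cubeC (d : ℕ) (c : ℝ) : Set (Pt d) := {x | ∀ i, |x i| ≤ c / 2}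

/-- The half-open unit cube `(-1/2, 1/2]^d + z` centered at `z`. -/
def cubeQ {d : ℕ} (z : Pt d) : Set (Pt d) :=
  {x | ∀ i, z i - 1 / 2 < x i ∧ x i ≤ z i + 1 / 2}

/-- The cube `[0, c]^d`. -/
def cube0 (d : ℕ) (c : ℝ) : Set (Pt d) := {x | ∀ i, 0 ≤ x i ∧ x i ≤ c}

section LA
set_option maxHeartbeats 1000000

open Module Submodule

variable {V : Type*}

/-- single generators set -/
noncomputable def sgens (D : Finset (Finset V)) : Set (Chain V) :=
  (fun σ => Finsupp.single σ (1 : ZMod 2)) '' ↑D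

lemma chainGroup_mono {K K' : Set (Finset V)} (h : K ⊆ K') (q : ℕ) :
    chainGroup K q ≤ chainGroup K' q := by
  apply span_mono
  rintro c ⟨σ, hσ, hc, rfl⟩
  exact ⟨σ, h hσ, hc, rfl⟩

lemma chainGroup_fd (K : Set (Finset V)) (q : ℕ) (U : Finset V)
    (hK : ∀ σ ∈ K, σ ⊆ U) :
    FiniteDimensional (ZMod 2) (chainGroup K q) := by
  classical
  have hle : chainGroup K q ≤ span (ZMod 2) (sgens U.powerset) := by
    apply span_mono
    rintro c ⟨σ, hσ, hc, rfl⟩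
    exact ⟨σ, by simpa using hK σ hσ, rfl⟩
  have : FiniteDimensional (ZMod 2) (span (ZMod 2) (sgens U.powerset)) :=
    FiniteDimensional.span_of_finite _ ((U.powerset.finite_toSet).image _)
  exact Submodule.finiteDimensional_of_le hle

lemma finrank_sgens_le (D : Finset (Finset V)) :
    finrank (ZMod 2) (span (ZMod 2) (sgens D)) ≤ D.card := by
  classical
  have h1 : sgens D = ↑(D.image (fun σ => Finsupp.single σ (1 : ZMod 2))) := by
    simp [sgens]
  calc finrank (ZMod 2) (span (ZMod 2) (sgens D))
      ≤ (D.image (fun σ => Finsupp.single σ (1 : ZMod 2))).card := by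
        rw [h1]; exact finrank_span_finset_le_card _
    _ ≤ D.card := Finset.card_image_le

lemma chainGroup_le_sup (K K' : Set (Finset V)) (q : ℕ) (D : Finset (Finset V))
    (h : ∀ σ ∈ K', σ ∉ K → σ ∈ D) :
    chainGroup K' q ≤ chainGroup K q ⊔ span (ZMod 2) (sgens D) := by
  apply span_le.2
  rintro c ⟨σ, hσ, hc, rfl⟩
  by_cases hK : σ ∈ K
  · exact Submodule.mem_sup_left (subset_span ⟨σ, hK, hc, rfl⟩)
  · exact Submodule.mem_sup_right (subset_span ⟨σ, h σ hσ hK, rfl⟩)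

lemma pBetti_diff_le (Kf Kf' : ℝ → Set (Finset V)) (q : ℕ) (r s : ℝ)
    (hr : Kf r ⊆ Kf' r) (hs : Kf s ⊆ Kf' s)
    (U : Finset V) (hUr : ∀ σ ∈ Kf' r, σ ⊆ U) (hUs : ∀ σ ∈ Kf' s, σ ⊆ U)
    (D : Finset (Finset V))
    (hDr : ∀ σ ∈ Kf' r, σ ∉ Kf r → σ ∈ D) (hDs : ∀ σ ∈ Kf' s, σ ∉ Kf s → σ ∈ D) :
    pBetti Kf' q r s ≤ pBetti Kf q r s + D.card ∧
    pBetti Kf q r s ≤ pBetti Kf' q r s + 2 * D.card := by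
  classical
  set C : Submodule (ZMod 2) (Chain V) := chainGroup (Kf r) q with hC
  set C' : Submodule (ZMod 2) (Chain V) := chainGroup (Kf' r) q with hC'
  set C1 : Submodule (ZMod 2) (Chain V) := chainGroup (Kf s) (q + 1) with hC1
  set C1' : Submodule (ZMod 2) (Chain V) := chainGroup (Kf' s) (q + 1) with hC1'
  set Z : Submodule (ZMod 2) (Chain V) := cycleGroup (Kf r) q with hZdef
  set Z' : Submodule (ZMod 2) (Chain V) := cycleGroup (Kf' r) q with hZ'def
  set B : Submodule (ZMod 2) (Chain V) := boundaryGroup (Kf s) q with hBdef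
  set B' : Submodule (ZMod 2) (Chain V) := boundaryGroup (Kf' s) q with hB'def
  have fdC' : FiniteDimensional (ZMod 2) C' := chainGroup_fd _ _ U hUr
  have fdC1' : FiniteDimensional (ZMod 2) C1' := chainGroup_fd _ _ U hUs
  have hCC' : C ≤ C' := chainGroup_mono hr q
  have hC1C1' : C1 ≤ C1' := chainGroup_mono hs (q + 1)
  have fdC : FiniteDimensional (ZMod 2) C := Submodule.finiteDimensional_of_le hCC'
  have fdC1 : FiniteDimensional (ZMod 2) C1 := Submodule.finiteDimensional_of_le hC1C1'
  have hZC : Z ≤ C := inf_le_left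
  have hZ'C' : Z' ≤ C' := inf_le_left
  have fdZ : FiniteDimensional (ZMod 2) Z := Submodule.finiteDimensional_of_le hZC
  have fdZ' : FiniteDimensional (ZMod 2) Z' := Submodule.finiteDimensional_of_le hZ'C'
  have fdB : FiniteDimensional (ZMod 2) B := Module.Finite.map _ _
  have fdB' : FiniteDimensional (ZMod 2) B' := Module.Finite.map _ _
  have fdS : FiniteDimensional (ZMod 2) (span (ZMod 2) (sgens D)) :=
    FiniteDimensional.span_of_finite _ ((D.finite_toSet).image _)
  have hZZ' : Z ≤ Z' := inf_le_inf_right _ hCC'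
  have hBB' : B ≤ B' := Submodule.map_mono hC1C1'
  -- dimension of C' vs C
  have hdimC' : finrank (ZMod 2) C' ≤ finrank (ZMod 2) C + D.card := by
    calc finrank (ZMod 2) C'
        ≤ finrank (ZMod 2) ↥(C ⊔ span (ZMod 2) (sgens D)) :=
          Submodule.finrank_mono (chainGroup_le_sup _ _ _ D hDr)
      _ ≤ finrank (ZMod 2) C + finrank (ZMod 2) (span (ZMod 2) (sgens D)) :=
          Submodule.finrank_add_le_finrank_add_finrank _ _
      _ ≤ finrank (ZMod 2) C + D.card := by
          have := finrank_sgens_le D; omega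
  -- dimension of B' vs B
  have hdimB' : finrank (ZMod 2) B' ≤ finrank (ZMod 2) B + D.card := by
    have hmap : B' ≤ B ⊔ Submodule.map (bdry V) (span (ZMod 2) (sgens D)) := by
      rw [hB'def, boundaryGroup]
      calc Submodule.map (bdry V) C1'
          ≤ Submodule.map (bdry V) (C1 ⊔ span (ZMod 2) (sgens D)) :=
            Submodule.map_mono (chainGroup_le_sup _ _ _ D hDs)
        _ = B ⊔ Submodule.map (bdry V) (span (ZMod 2) (sgens D)) := by
            rw [Submodule.map_sup]; rfl
    calc finrank (ZMod 2) B'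
        ≤ finrank (ZMod 2) ↥(B ⊔ Submodule.map (bdry V) (span (ZMod 2) (sgens D))) :=
          Submodule.finrank_mono hmap
      _ ≤ finrank (ZMod 2) B
            + finrank (ZMod 2) (Submodule.map (bdry V) (span (ZMod 2) (sgens D))) :=
          Submodule.finrank_add_le_finrank_add_finrank _ _
      _ ≤ finrank (ZMod 2) B + D.card := by
          have h1 : finrank (ZMod 2) (Submodule.map (bdry V) (span (ZMod 2) (sgens D)))
              ≤ finrank (ZMod 2) (span (ZMod 2) (sgens D)) := Submodule.finrank_map_le _ _
          have := finrank_sgens_le D; omega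
  -- Z' ∩ C = Z
  have hZ'C : Z' ⊓ C = Z := by
    rw [hZdef, hZ'def, cycleGroup, cycleGroup, ← hC, ← hC']
    rw [inf_right_comm]
    congr 1
    exact inf_eq_right.2 hCC'
  have hdimZ' : finrank (ZMod 2) Z' ≤ finrank (ZMod 2) Z + D.card := by
    have key := Submodule.finrank_sup_add_finrank_inf_eq Z' C
    rw [hZ'C] at key
    have h1 : finrank (ZMod 2) ↥(Z' ⊔ C) ≤ finrank (ZMod 2) C' :=
      Submodule.finrank_mono (sup_le hZ'C' hCC')
    omega
  have hdimZmono : finrank (ZMod 2) Z ≤ finrank (ZMod 2) Z' := Submodule.finrank_mono hZZ'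
  have hdimImono : finrank (ZMod 2) ↥(Z ⊓ B)
      ≤ finrank (ZMod 2) ↥(Z' ⊓ B') :=
    Submodule.finrank_mono (inf_le_inf hZZ' hBB')
  -- step (a)
  have ha : finrank (ZMod 2) ↥(Z' ⊓ B') + finrank (ZMod 2) Z
      ≤ finrank (ZMod 2) ↥(Z ⊓ B') + finrank (ZMod 2) Z' := by
    have key := Submodule.finrank_sup_add_finrank_inf_eq (Z' ⊓ B') Z
    have h1 : (Z' ⊓ B') ⊓ Z = Z ⊓ B' := by
      rw [inf_right_comm]
      congr 1
      exact inf_eq_right.2 hZZ'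
    have h2 : finrank (ZMod 2) ↥((Z' ⊓ B') ⊔ Z)
        ≤ finrank (ZMod 2) Z' := Submodule.finrank_mono (sup_le inf_le_left hZZ')
    rw [h1] at key
    omega
  -- step (b)
  have hb : finrank (ZMod 2) ↥(Z ⊓ B') + finrank (ZMod 2) B
      ≤ finrank (ZMod 2) ↥(Z ⊓ B) + finrank (ZMod 2) B' := by
    have key := Submodule.finrank_sup_add_finrank_inf_eq (Z ⊓ B') B
    have h1 : (Z ⊓ B') ⊓ B = Z ⊓ B := by
      rw [inf_assoc]
      congr 1
      exact inf_eq_right.2 hBB'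
    have h2 : finrank (ZMod 2) ↥((Z ⊓ B') ⊔ B)
        ≤ finrank (ZMod 2) B' := Submodule.finrank_mono (sup_le inf_le_right hBB')
    rw [h1] at key
    omega
  -- Betti formulas
  have hbetti : ∀ (ZZ BB : Submodule (ZMod 2) (Chain V)),
      ∀ _ : FiniteDimensional (ZMod 2) ZZ, ∀ _ : FiniteDimensional (ZMod 2) ↥(ZZ ⊓ BB),
      finrank (ZMod 2) (↥ZZ ⧸ (Submodule.comap ZZ.subtype BB : Submodule (ZMod 2) ↥ZZ))
        + finrank (ZMod 2) ↥(ZZ ⊓ BB) = finrank (ZMod 2) ZZ := by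
    intro ZZ BB _ _
    have h1 := Submodule.finrank_quotient_add_finrank
      (Submodule.comap ZZ.subtype BB : Submodule (ZMod 2) ↥ZZ)
    have h2 : finrank (ZMod 2) (Submodule.comap ZZ.subtype BB : Submodule (ZMod 2) ↥ZZ)
        = finrank (ZMod 2) ↥(ZZ ⊓ BB) := by
      rw [← Submodule.finrank_map_subtype_eq ZZ, Submodule.map_comap_subtype]
    omega
  have e1 := hbetti Z B fdZ (Submodule.finiteDimensional_of_le
    (inf_le_left : Z ⊓ B ≤ Z))
  have e2 := hbetti Z' B' fdZ' (Submodule.finiteDimensional_of_le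
    (inf_le_left : Z' ⊓ B' ≤ Z'))
  have hp1 : pBetti Kf q r s
      = finrank (ZMod 2) (↥Z ⧸ (Submodule.comap Z.subtype B : Submodule (ZMod 2) ↥Z)) := rfl
  have hp2 : pBetti Kf' q r s
      = finrank (ZMod 2) (↥Z' ⧸ (Submodule.comap Z'.subtype B' : Submodule (ZMod 2) ↥Z')) := rfl
  rw [hp1, hp2]
  omega

end LA

section Geometry

variable {d : ℕ}

lemma coord_le_dist (x y : Pt d) (i : Fin d) : |x i - y i| ≤ dist x y := by
  rw [EuclideanSpace.dist_eq]
  rw [← Real.dist_eq]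
  refine Real.le_sqrt_of_sq_le ?_
  exact Finset.single_le_sum (f := fun j => dist (x j) (y j) ^ 2)
    (fun j _ => sq_nonneg _) (Finset.mem_univ i)

lemma cx_mono (Kx : ℝ → Set (Pt d) → Set (Finset (Pt d)))
    (hKx : Kx = cechCx d ∨ Kx = ripsCx d) (t : ℝ) {S S' : Set (Pt d)} (h : S ⊆ S') :
    Kx t S ⊆ Kx t S' := by
  rcases hKx with rfl | rfl
  · rintro σ ⟨h1, h2, h3⟩; exact ⟨h1.trans h, h2, h3⟩
  · rintro σ ⟨h1, h2, h3⟩; exact ⟨h1.trans h, h2, h3⟩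

lemma cx_vertices (Kx : ℝ → Set (Pt d) → Set (Finset (Pt d)))
    (hKx : Kx = cechCx d ∨ Kx = ripsCx d) (t : ℝ) (S : Set (Pt d)) :
    ∀ σ ∈ Kx t S, ↑σ ⊆ S := by
  rcases hKx with rfl | rfl
  · rintro σ ⟨h1, _, _⟩; exact h1
  · rintro σ ⟨h1, _, _⟩; exact h1

/-- every vertex of a simplex of `Kx t (S ∪ T)` not in `Kx t S` is within `2s` of a
point of `T \ S`. -/
lemma new_simplex_near (Kx : ℝ → Set (Pt d) → Set (Finset (Pt d)))
    (hKx : Kx = cechCx d ∨ Kx = ripsCx d) {t s : ℝ} (ht0 : 0 ≤ t) (hts : t ≤ s)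
    {S T : Set (Pt d)} {σ : Finset (Pt d)}
    (hσ : σ ∈ Kx t (S ∪ T)) (hσn : σ ∉ Kx t S) :
    ∃ t0 ∈ (σ : Set (Pt d)), t0 ∈ T ∧ t0 ∉ S ∧
      ∀ x ∈ (σ : Set (Pt d)), dist x t0 ≤ 2 * s := by
  have hs0 : 0 ≤ s := ht0.trans hts
  have hsub : ¬ ((σ : Set (Pt d)) ⊆ S) := by
    intro hc
    apply hσn
    rcases hKx with rfl | rfl
    · exact ⟨hc, hσ.2.1, hσ.2.2⟩
    · exact ⟨hc, hσ.2.1, hσ.2.2⟩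
  obtain ⟨t0, ht0σ, ht0S⟩ := Set.not_subset.1 hsub
  have ht0T : t0 ∈ T := by
    have := (cx_vertices Kx hKx t (S ∪ T) σ hσ) ht0σ
    rcases this with h | h
    · exact absurd h ht0S
    · exact h
  refine ⟨t0, ht0σ, ht0T, ht0S, ?_⟩
  intro x hxσ
  rcases hKx with rfl | rfl
  · obtain ⟨-, -, c, hc⟩ := hσ
    simp only [Set.mem_iInter] at hc
    have h1 : dist x c ≤ t := by simpa [Metric.mem_closedBall, dist_comm] using hc x hxσ
    have h2 : dist t0 c ≤ t := by simpa [Metric.mem_closedBall, dist_comm] using hc t0 ht0σ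
    calc dist x t0 ≤ dist x c + dist c t0 := dist_triangle _ _ _
      _ ≤ t + t := by rw [dist_comm c t0]; exact add_le_add h1 h2
      _ ≤ 2 * s := by linarith
  · obtain ⟨-, -, hdiam⟩ := hσ
    have hb : Bornology.IsBounded (σ : Set (Pt d)) := σ.finite_toSet.isBounded
    calc dist x t0 ≤ Metric.diam (σ : Set (Pt d)) :=
          Metric.dist_le_diam_of_mem hb hxσ ht0σ
      _ ≤ t := hdiam
      _ ≤ 2 * s := by linarith

end Geometry

section Det

variable {d : ℕ}

/-- the box of radius `1/2 + 2s` around `z` (sup norm). -/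
def Rset (z : Pt d) (s : ℝ) : Set (Pt d) := {x | ∀ i, |x i - z i| ≤ 1 / 2 + 2 * s}

lemma det_bound (Kx : ℝ → Set (Pt d) → Set (Finset (Pt d)))
    (hKx : Kx = cechCx d ∨ Kx = ripsCx d) (q : ℕ) (r s : ℝ) (hr : 0 ≤ r) (hrs : r ≤ s)
    (z : Pt d) (S T : Set (Pt d)) (hS : S.Finite) (hT : T.Finite) (hTz : T ⊆ cubeQ z) :
    |(pBettiPts Kx q r s (S ∪ T) : ℝ) - (pBettiPts Kx q r s S : ℝ)|
      ≤ 2 * 2 ^ (((S ∪ T) ∩ Rset z s).ncard) := by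
  classical
  have hST : (S ∪ T).Finite := hS.union hT
  have hW : ((S ∪ T) ∩ Rset z s).Finite := hST.subset Set.inter_subset_left
  set U : Finset (Pt d) := hST.toFinset with hU
  set W : Finset (Pt d) := hW.toFinset with hWdef
  -- key membership fact
  have hnew : ∀ t', 0 ≤ t' → t' ≤ s → ∀ σ ∈ Kx t' (S ∪ T), σ ∉ Kx t' S →
      σ ∈ W.powerset := by
    intro t' ht0 hts σ hσ hσn
    obtain ⟨t0, ht0σ, ht0T, -, hdist⟩ := new_simplex_near Kx hKx ht0 hts hσ hσn
    rw [Finset.mem_powerset]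
    intro x hxσ
    rw [hWdef, Set.Finite.mem_toFinset]
    constructor
    · exact cx_vertices Kx hKx t' (S ∪ T) σ hσ hxσ
    · intro i
      have h1 : |x i - t0 i| ≤ dist x t0 := coord_le_dist x t0 i
      have h2 : dist x t0 ≤ 2 * s := hdist x hxσ
      have h3 : |t0 i - z i| ≤ 1 / 2 := by
        have := hTz ht0T i
        rw [abs_le]; constructor <;> linarith [this.1, this.2]
      calc |x i - z i| = |(x i - t0 i) + (t0 i - z i)| := by ring_nf
        _ ≤ |x i - t0 i| + |t0 i - z i| := abs_add_le _ _
        _ ≤ 1 / 2 + 2 * s := by linarith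
  have hUr : ∀ t', ∀ σ ∈ Kx t' (S ∪ T), σ ⊆ U := by
    intro t' σ hσ x hx
    rw [hU, Set.Finite.mem_toFinset]
    exact cx_vertices Kx hKx t' (S ∪ T) σ hσ hx
  have key := pBetti_diff_le (fun t => Kx t S) (fun t => Kx t (S ∪ T)) q r s
    (cx_mono Kx hKx r Set.subset_union_left)
    (cx_mono Kx hKx s Set.subset_union_left)
    U (hUr r) (hUr s) W.powerset
    (fun σ hσ hσn => hnew r hr hrs σ hσ hσn)
    (fun σ hσ hσn => hnew s (hr.trans hrs) le_rfl σ hσ hσn)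
  have hcard : W.powerset.card = 2 ^ (((S ∪ T) ∩ Rset z s).ncard) := by
    rw [Finset.card_powerset]
    congr 1
    rw [hWdef, Set.ncard_eq_toFinset_card _ hW]
  obtain ⟨k1, k2⟩ := key
  rw [hcard] at k1 k2
  have h1 : pBettiPts Kx q r s (S ∪ T) = pBetti (fun t => Kx t (S ∪ T)) q r s := rfl
  have h2 : pBettiPts Kx q r s S = pBetti (fun t => Kx t S) q r s := rfl
  rw [h1, h2, abs_sub_le_iff]
  constructor
  · have := (Nat.cast_le (α := ℝ)).2 k1
    push_cast at this ⊢
    nlinarith [pow_nonneg (by norm_num : (0:ℝ) ≤ 2) (((S ∪ T) ∩ Rset z s).ncard)]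
  · have := (Nat.cast_le (α := ℝ)).2 k2
    push_cast at this ⊢
    linarith

end Det

section Top
open MeasureTheory

variable {d : ℕ}

lemma isClosed_Rset (z : Pt d) (s : ℝ) : IsClosed (Rset z s) := by
  have : Rset z s = ⋂ i, ((fun x : Pt d => x i) ⁻¹' {t : ℝ | |t - z i| ≤ 1 / 2 + 2 * s}) := by
    ext x; simp [Rset, Set.mem_iInter]
  rw [this]
  refine isClosed_iInter fun i => ?_
  exact IsClosed.preimage (EuclideanSpace.proj (𝕜 := ℝ) i).continuous
    (isClosed_le ((continuous_id.sub continuous_const).abs) continuous_const)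

lemma isBounded_Rset (z : Pt d) (s : ℝ) : Bornology.IsBounded (Rset z s) := by
  refine isBounded_iff_forall_norm_le.2
    ⟨Real.sqrt (∑ i, (|z i| + |1 / 2 + 2 * s|) ^ 2), fun x hx => ?_⟩
  rw [EuclideanSpace.norm_eq]
  apply Real.sqrt_le_sqrt
  refine Finset.sum_le_sum fun i _ => ?_
  have h1 : |x i| ≤ |z i| + |1 / 2 + 2 * s| := by
    have h2 := hx i
    have h3 : |x i| - |z i| ≤ |x i - z i| := by
      have := abs_sub_abs_le_abs_sub (x i) (z i); linarith
    have h4 : |x i - z i| ≤ |1 / 2 + 2 * s| := h2.trans (le_abs_self _)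
    linarith
  calc ‖x i‖ ^ 2 = |x i| ^ 2 := by rw [Real.norm_eq_abs]
    _ ≤ (|z i| + |1 / 2 + 2 * s|) ^ 2 := by
        have h0 : (0:ℝ) ≤ |x i| := abs_nonneg _
        nlinarith
  
lemma isCompact_Rset (z : Pt d) (s : ℝ) : IsCompact (Rset z s) :=
  Metric.isCompact_of_isClosed_isBounded (isClosed_Rset z s) (isBounded_Rset z s)

lemma isClosed_cube0 (c : ℝ) : IsClosed (cube0 d c) := by
  have : cube0 d c = ⋂ i, ((fun x : Pt d => x i) ⁻¹' (Set.Icc 0 c)) := by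
    ext x; simp [cube0, Set.mem_iInter, Set.mem_Icc]
  rw [this]
  exact isClosed_iInter fun i =>
    IsClosed.preimage (EuclideanSpace.proj (𝕜 := ℝ) i).continuous isClosed_Icc

lemma isCompact_cube0 (c : ℝ) : IsCompact (cube0 d c) := by
  refine Metric.isCompact_of_isClosed_isBounded (isClosed_cube0 c) ?_
  refine isBounded_iff_forall_norm_le.2 ⟨Real.sqrt (∑ _i : Fin d, |c| ^ 2), fun x hx => ?_⟩
  rw [EuclideanSpace.norm_eq]
  apply Real.sqrt_le_sqrt
  refine Finset.sum_le_sum fun i _ => ?_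
  have h2 := hx i
  have h1 : |x i| ≤ |c| := by
    rw [abs_of_nonneg h2.1]
    exact h2.2.trans (le_abs_self c)
  calc ‖x i‖ ^ 2 = |x i| ^ 2 := by rw [Real.norm_eq_abs]
    _ ≤ |c| ^ 2 := by nlinarith [abs_nonneg (x i)]

lemma cubeQ_subset_Rset (z : Pt d) (s : ℝ) (hs : 0 ≤ s) : cubeQ z ⊆ Rset z s := by
  intro x hx i
  have h := hx i
  rw [abs_le]
  constructor <;> [linarith [h.1]; linarith [h.2]]

end Top

section Meas
open MeasureTheory
open scoped ENNReal

variable {Ω : Type*} [MeasurableSpace Ω]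

lemma null_of_subset_compl (μ : Measure Ω) [IsProbabilityMeasure μ] {E t : Set Ω}
    (hE : μ E = 1) (ht : MeasurableSet t) (hsub : t ⊆ Eᶜ) : μ t = 0 := by
  have h1 : E ⊆ tᶜ := fun ω hω hct => hsub hct hω
  have h2 : μ tᶜ = 1 - μ t := by
    rw [measure_compl ht (measure_ne_top μ t), measure_univ]
  have h3 : (1 : ℝ≥0∞) ≤ 1 - μ t := by
    rw [← h2, ← hE]; exact measure_mono h1
  by_contra h
  have h4 : 1 - μ t < 1 := ENNReal.sub_lt_self (by norm_num) (by norm_num) h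
  exact absurd (h3.trans_lt h4) (lt_irrefl _)

/-- key soft argument: if `g ≥ 0` is dominated by a measurable `H` on a set `G ⊇ E ∩ L`
where `E` is a (possibly non-measurable) event of probability one and `L` holds a.e.,
then `∫ g ≤ c` whenever `∫⁻ H ≤ ofReal c`. -/
lemma thick_integral_le (μ : Measure Ω) [IsProbabilityMeasure μ]
    (g : Ω → ℝ) (hg0 : ∀ ω, 0 ≤ g ω) (G E L : Set Ω)
    (hE : μ E = 1) (hL : ∀ᵐ ω ∂μ, ω ∈ L) (hEL : E ∩ L ⊆ G)
    (H : Ω → ℝ≥0∞) (hH : Measurable H)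
    (hdom : ∀ ω ∈ G, ENNReal.ofReal (g ω) ≤ H ω)
    (c : ℝ) (hc : 0 ≤ c) (hHc : ∫⁻ ω, H ω ∂μ ≤ ENNReal.ofReal c) :
    ∫ ω, g ω ∂μ ≤ c := by
  by_cases hint : Integrable g μ
  · have hgm := hint.1
    set g' := hgm.mk g with hg'
    have hae : g =ᵐ[μ] g' := hgm.ae_eq_mk
    have hg'm : Measurable fun ω => ENNReal.ofReal (g' ω) :=
      ENNReal.measurable_ofReal.comp hgm.measurable_mk
    set D : Set Ω := {ω | H ω < ENNReal.ofReal (g' ω)} with hD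
    have hDm : MeasurableSet D := measurableSet_lt hH hg'm
    have hnull : μ ({ω | g ω ≠ g' ω} ∪ Lᶜ) = 0 := by
      refine measure_union_null ?_ ?_
      · exact hae
      · exact hL
    set M : Set Ω := toMeasurable μ ({ω | g ω ≠ g' ω} ∪ Lᶜ) with hM
    have hM0 : μ M = 0 := by rw [hM, measure_toMeasurable]; exact hnull
    have hMm : MeasurableSet M := measurableSet_toMeasurable _ _
    have hDM : μ (D \ M) = 0 := by
      refine null_of_subset_compl μ hE (hDm.diff hMm) ?_
      rintro ω ⟨hωD, hωM⟩ hωE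
      have hωnM : ω ∈ L ∧ g ω = g' ω := by
        have h1 : ω ∉ {ω | g ω ≠ g' ω} ∪ Lᶜ := fun hc' => hωM (subset_toMeasurable _ _ hc')
        simp only [Set.mem_union, Set.mem_setOf_eq, Set.mem_compl_iff, not_or, not_not, ne_eq] at h1
        exact ⟨h1.2, h1.1⟩
      have hωG : ω ∈ G := hEL ⟨hωE, hωnM.1⟩
      have := hdom ω hωG
      rw [hωnM.2] at this
      exact absurd this (not_le.2 hωD)
    have hDnull : μ D = 0 := by
      have : D ⊆ (D \ M) ∪ M := by
        intro ω hω; by_cases h : ω ∈ M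
        · exact Or.inr h
        · exact Or.inl ⟨hω, h⟩
      exact measure_mono_null this (measure_union_null hDM hM0)
    have haeb : ∀ᵐ ω ∂μ, ENNReal.ofReal (g ω) ≤ H ω := by
      have h1 : ∀ᵐ ω ∂μ, ω ∉ D := by
        rw [ae_iff]; simpa using hDnull
      filter_upwards [hae, h1] with ω he hd
      rw [he]
      exact not_lt.1 hd
    rw [integral_eq_lintegral_of_nonneg_ae (Filter.Eventually.of_forall hg0) hint.1]
    exact ENNReal.toReal_le_of_le_ofReal hc ((lintegral_mono_ae haeb).trans hHc)
  · rw [integral_undef hint]; exact hc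

lemma poisson_series_bound (lam lam0 : ℝ) (h0 : 0 ≤ lam) (h1 : lam ≤ lam0) :
    (∑' k : ℕ, ENNReal.ofReal (16 * 256 ^ k) *
        ENNReal.ofReal (Real.exp (-lam) * lam ^ k / (Nat.factorial k)))
      ≤ ENNReal.ofReal (16 * ∑' k : ℕ, (256 * lam0) ^ k / (Nat.factorial k)) := by
  have hlam00 : 0 ≤ lam0 := h0.trans h1
  have hsum0 : Summable fun k : ℕ => (256 * lam0) ^ k / (Nat.factorial k) :=
    Real.summable_pow_div_factorial _
  have hsum : Summable fun k : ℕ => 16 * ((256 * lam0) ^ k / (Nat.factorial k)) :=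
    hsum0.mul_left _
  calc (∑' k : ℕ, ENNReal.ofReal (16 * 256 ^ k) *
        ENNReal.ofReal (Real.exp (-lam) * lam ^ k / (Nat.factorial k)))
      ≤ ∑' k : ℕ, ENNReal.ofReal (16 * ((256 * lam0) ^ k / (Nat.factorial k))) := by
        refine ENNReal.tsum_le_tsum fun k => ?_
        rw [← ENNReal.ofReal_mul (by positivity)]
        refine ENNReal.ofReal_le_ofReal ?_
        have he : Real.exp (-lam) ≤ 1 := Real.exp_le_one_iff.2 (by linarith)
        have hp : lam ^ k ≤ lam0 ^ k := pow_le_pow_left₀ h0 h1 k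
        have key : Real.exp (-lam) * lam ^ k ≤ lam0 ^ k := by
          nlinarith [Real.exp_pos (-lam), pow_nonneg h0 k]
        calc 16 * 256 ^ k * (Real.exp (-lam) * lam ^ k / (Nat.factorial k))
            ≤ 16 * 256 ^ k * (lam0 ^ k / (Nat.factorial k)) := by
              gcongr
          _ = 16 * ((256 * lam0) ^ k / (Nat.factorial k)) := by
              rw [mul_pow]; ring
    _ = ENNReal.ofReal (∑' k : ℕ, 16 * ((256 * lam0) ^ k / (Nat.factorial k))) := by
        rw [ENNReal.ofReal_tsum_of_nonneg (fun k => by positivity) hsum]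
    _ = ENNReal.ofReal (16 * ∑' k : ℕ, (256 * lam0) ^ k / (Nat.factorial k)) := by
        rw [tsum_mul_left]

lemma pow4_bound (x : ℝ) (mm k l : ℕ) (hx : |x| ≤ 2 * 2 ^ mm) (hmm : mm ≤ k + l) :
    x ^ 4 ≤ 16 * 256 ^ k + 16 * 256 ^ l := by
  have h1 : x ^ 4 ≤ (2 * 2 ^ mm) ^ 4 := by
    calc x ^ 4 = |x| ^ 4 := by
          rw [← abs_pow]
          exact (abs_of_nonneg (by positivity)).symm
      _ ≤ (2 * 2 ^ mm) ^ 4 := pow_le_pow_left₀ (abs_nonneg x) hx 4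
  have h2 : (2 * 2 ^ mm : ℝ) ^ 4 = 16 * 16 ^ mm := by
    rw [mul_pow, ← pow_mul, mul_comm mm 4, pow_mul]
    norm_num
  have h3 : (16 : ℝ) ^ mm ≤ 16 ^ (k + l) := pow_le_pow_right₀ (by norm_num) hmm
  have h4 : (16 : ℝ) ^ (k + l) ≤ 256 ^ k + 256 ^ l := by
    rcases le_total k l with h | h
    · have : (16:ℝ) ^ (k + l) ≤ 16 ^ (l + l) :=
        pow_le_pow_right₀ (by norm_num) (by omega)
      have he : (16:ℝ) ^ (l + l) = 256 ^ l := by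
        rw [pow_add, ← mul_pow]; norm_num
      nlinarith [pow_nonneg (by norm_num : (0:ℝ) ≤ 256) k]
    · have : (16:ℝ) ^ (k + l) ≤ 16 ^ (k + k) :=
        pow_le_pow_right₀ (by norm_num) (by omega)
      have he : (16:ℝ) ^ (k + k) = 256 ^ k := by
        rw [pow_add, ← mul_pow]; norm_num
      nlinarith [pow_nonneg (by norm_num : (0:ℝ) ≤ 256) l]
  linarith [h2 ▸ h1]

end Meas

open MeasureTheory in
/-- Uniform fourth-moment bound for add-cube differences: let
`P_n`, `P'_n` be independent Poisson processes on `[0,1]^d` with intensity `nκ`, where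
`κ` is a bounded density supported in `[0,1]^d`, and let `z_j` range over the lattice
points whose cube `Q(z_j) = (−1/2,1/2]^d + z_j` intersects `[0, n^{1/d}]^d`.  Then for
every fixed `(r,s)`,
`sup_{n,j} E[ |β_q^{r,s}(K(n^{1/d}P_n ∪ (n^{1/d}P'_n ∩ Q(z_j)))) −
β_q^{r,s}(K(n^{1/d}P_n))|⁴ ] < ∞`. -/
theorem fourth_moment_add_cube {Ω : Type*} [MeasurableSpace Ω]
    (μ : Measure Ω) [IsProbabilityMeasure μ] {d : ℕ} (hd : 1 ≤ d)
    (κ : Pt d → ℝ) (hκ0 : ∀ x, 0 ≤ κ x) (hκb : ∃ Cb : ℝ, ∀ x, κ x ≤ Cb)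
    (hκsupp : ∀ x, x ∉ cube0 d 1 → κ x = 0) (hκint : ∫ x, κ x = 1)
    (P P' : ℕ → Ω → Set (Pt d))
    (hP : ∀ n : ℕ, IsPoissonPP μ (fun x => (n : ℝ) * κ x) (P n))
    (hP' : ∀ n : ℕ, IsPoissonPP μ (fun x => (n : ℝ) * κ x) (P' n))
    (hind : ∀ n : ℕ, IndepPP μ (P n) (P' n))
    (Kx : ℝ → Set (Pt d) → Set (Finset (Pt d))) (hKx : Kx = cechCx d ∨ Kx = ripsCx d)
    (q : ℕ) (r s : ℝ) (hr : 0 ≤ r) (hrs : r ≤ s) :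
    ∃ C : ℝ, ∀ n : ℕ, ∀ z : Pt d, (∀ i, ∃ k : ℤ, z i = (k : ℝ)) →
      (cubeQ z ∩ cube0 d ((n : ℝ) ^ ((1 : ℝ) / d))).Nonempty →
      ∫ ω, (((pBettiPts Kx q r s
              (((fun x : Pt d => ((n : ℝ) ^ ((1 : ℝ) / d)) • x) '' P n ω) ∪
                ((fun x : Pt d => ((n : ℝ) ^ ((1 : ℝ) / d)) • x) '' P' n ω ∩ cubeQ z)) :
              ℝ) -
            (pBettiPts Kx q r s
              ((fun x : Pt d => ((n : ℝ) ^ ((1 : ℝ) / d)) • x) '' P n ω) : ℝ)) ^ 4) ∂μ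
        ≤ C := by
  classical
  obtain ⟨Cb, hCb⟩ := hκb
  have hCb0 : 0 ≤ Cb := le_trans (hκ0 0) (hCb 0)
  have hd0 : (d : ℝ) ≠ 0 := Nat.cast_ne_zero.2 (by omega)
  have hκI : Integrable κ (volume : Measure (Pt d)) := by
    by_contra h
    rw [integral_undef h] at hκint
    norm_num at hκint
  have hs0 : 0 ≤ s := hr.trans hrs
  set V : ℝ := (volume (Rset (0 : Pt d) s)).toReal with hVdef
  have hV0 : 0 ≤ V := ENNReal.toReal_nonneg
  have hVfin : volume (Rset (0 : Pt d) s) < ⊤ :=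
    (isBounded_Rset (0 : Pt d) s).measure_lt_top
  set lam0 : ℝ := Cb * V with hlam0def
  have hlam00 : 0 ≤ lam0 := mul_nonneg hCb0 hV0
  set SS : ℝ := ∑' k : ℕ, (256 * lam0) ^ k / (Nat.factorial k) with hSSdef
  have hSS0 : 0 ≤ SS := tsum_nonneg fun k => by positivity
  have hC0 : (0 : ℝ) ≤ 32 * SS + 256 := by linarith
  refine ⟨32 * SS + 256, ?_⟩
  intro n z hz hzQ
  set a : ℝ := (n : ℝ) ^ ((1 : ℝ) / d) with hadef
  set m : Pt d → Pt d := fun x : Pt d => a • x with hmdef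
  have hQR : cubeQ z ⊆ Rset z s := cubeQ_subset_Rset z s hs0
  by_cases hn : n = 0
  · -- degenerate case
    subst hn
    have ha0 : a = 0 := by
      rw [hadef, Nat.cast_zero, Real.zero_rpow (one_div_ne_zero hd0)]
    have hcounts := (hP 0).counts Set.univ MeasurableSet.univ
      ((hκI.const_mul _).integrableOn) 0
    have hintzero : ∫ x in Set.univ, ((0 : ℕ) : ℝ) * κ x = 0 := by
      simp
    rw [hintzero] at hcounts
    have hmuE : μ {ω | (P 0 ω ∩ Set.univ).ncard = 0 ∧ (P 0 ω ∩ Set.univ).Finite} = 1 := by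
      rw [hcounts]; norm_num
    refine thick_integral_le μ _ (fun ω => by positivity)
      {ω | (P 0 ω ∩ Set.univ).ncard = 0 ∧ (P 0 ω ∩ Set.univ).Finite}
      {ω | (P 0 ω ∩ Set.univ).ncard = 0 ∧ (P 0 ω ∩ Set.univ).Finite}
      Set.univ hmuE (Filter.Eventually.of_forall fun _ => Set.mem_univ _)
      (fun ω hω => hω.1)
      (fun _ => ENNReal.ofReal 256) measurable_const ?_ _ hC0 ?_
    · -- domination
      intro ω hω
      have hPempty : P 0 ω = ∅ := by
        have := (Set.ncard_eq_zero hω.2).1 hω.1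
        rwa [Set.inter_univ] at this
      set S : Set (Pt d) := m '' P 0 ω with hSdef
      set T : Set (Pt d) := m '' P' 0 ω ∩ cubeQ z with hTdef
      have hT0 : T ⊆ {(0 : Pt d)} := by
        rintro x ⟨⟨y, _, rfl⟩, -⟩
        simp [hmdef, ha0]
      have hSfin : S.Finite := by
        rw [hSdef, hPempty, Set.image_empty]; exact Set.finite_empty
      have hTfin : T.Finite := (Set.finite_singleton _).subset hT0
      have hdet := det_bound Kx hKx q r s hr hrs z S T hSfin hTfin
        Set.inter_subset_right
      have hmm : ((S ∪ T) ∩ Rset z s).ncard ≤ 1 := by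
        have hsub : (S ∪ T) ∩ Rset z s ⊆ {(0 : Pt d)} := by
          rintro x ⟨hx1 | hx1, -⟩
          · exact absurd hx1 (by rw [hSdef, hPempty, Set.image_empty]; simp)
          · exact hT0 hx1
        calc ((S ∪ T) ∩ Rset z s).ncard ≤ ({(0 : Pt d)} : Set (Pt d)).ncard :=
              Set.ncard_le_ncard hsub (Set.finite_singleton _)
          _ = 1 := Set.ncard_singleton _
      refine ENNReal.ofReal_le_ofReal ?_
      set x : ℝ := (pBettiPts Kx q r s (S ∪ T) : ℝ) - (pBettiPts Kx q r s S : ℝ) with hxdef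
      have hxb : |x| ≤ 4 := by
        refine hdet.trans ?_
        have : (2 : ℝ) ^ (((S ∪ T) ∩ Rset z s).ncard) ≤ 2 ^ 1 :=
          pow_le_pow_right₀ (by norm_num) hmm
        norm_num at this ⊢
        linarith
      calc x ^ 4 = |x| ^ 4 := by
            rw [← abs_pow]; exact (abs_of_nonneg (by positivity)).symm
        _ ≤ 4 ^ 4 := pow_le_pow_left₀ (abs_nonneg x) hxb 4
        _ ≤ 256 := by norm_num
    · -- lintegral bound
      rw [lintegral_const, measure_univ, mul_one]
      exact ENNReal.ofReal_le_ofReal (by linarith)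
  · -- main case n ≥ 1
    have hn1 : 1 ≤ n := Nat.one_le_iff_ne_zero.2 hn
    have hnR : (1 : ℝ) ≤ (n : ℝ) := by exact_mod_cast hn1
    have hnne : (n : ℝ) ≠ 0 := by linarith
    have ha0 : 0 < a := Real.rpow_pos_of_pos (by linarith) _
    have hmcont : Continuous m := by
      rw [hmdef]; exact continuous_const_smul a
    set AR : Set (Pt d) := m ⁻¹' Rset z s with hARdef
    have hARclosed : IsClosed AR := (isClosed_Rset z s).preimage hmcont
    have hARmeas : MeasurableSet AR := hARclosed.measurableSet
    have hARbdd : Bornology.IsBounded AR := by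
      obtain ⟨CR, hCR⟩ := isBounded_iff_forall_norm_le.1 (isBounded_Rset z s)
      refine isBounded_iff_forall_norm_le.2 ⟨CR / a, fun x hx => ?_⟩
      have h1 : ‖a • x‖ ≤ CR := hCR _ hx
      rw [norm_smul, Real.norm_eq_abs, abs_of_pos ha0] at h1
      rw [le_div_iff₀ ha0, mul_comm]
      exact h1
    have hARcpt : IsCompact AR :=
      Metric.isCompact_of_isClosed_isBounded hARclosed hARbdd
    -- intensity over AR
    have hInt : IntegrableOn (fun x => (n : ℝ) * κ x) AR volume :=
      (hκI.const_mul _).integrableOn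
    set lam : ℝ := ∫ x in AR, (n : ℝ) * κ x with hlamdef
    have hlamnn : 0 ≤ lam :=
      setIntegral_nonneg hARmeas fun x _ => mul_nonneg (Nat.cast_nonneg n) (hκ0 x)
    have haa : a ^ d = (n : ℝ) := by
      rw [hadef, ← Real.rpow_natCast ((n : ℝ) ^ ((1 : ℝ) / d)) d,
        ← Real.rpow_mul (Nat.cast_nonneg n), one_div, inv_mul_cancel₀ hd0,
        Real.rpow_one]
    have hRtrans : volume (Rset z s) = volume (Rset (0 : Pt d) s) := by
      have h1 : Rset z s = (fun x : Pt d => -z + x) ⁻¹' Rset (0 : Pt d) s := by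
        ext x
        simp only [Rset, Set.mem_setOf_eq, Set.mem_preimage, PiLp.add_apply,
          PiLp.neg_apply, PiLp.zero_apply, sub_zero]
        constructor
        · intro h i; rw [show -z i + x i = x i - z i by ring]; exact h i
        · intro h i; have := h i; rwa [show -z i + x i = x i - z i by ring] at this
      rw [h1, measure_preimage_add]
    have hvolAR : volume AR = ENNReal.ofReal ((n : ℝ))⁻¹ * volume (Rset (0 : Pt d) s) := by
      have h1 := Measure.addHaar_preimage_smul (volume : Measure (Pt d))
        (ne_of_gt ha0) (Rset z s)
      rw [finrank_euclideanSpace_fin, haa] at h1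
      rw [hARdef, hmdef]
      rw [show (fun x : Pt d => a • x) = (a • ·) from rfl, h1,
        abs_of_nonneg (by positivity), hRtrans]
    have hARfin : volume AR < ⊤ := by
      rw [hvolAR]
      exact ENNReal.mul_lt_top ENNReal.ofReal_lt_top hVfin
    have htoReal : (volume AR).toReal = (n : ℝ)⁻¹ * V := by
      rw [hvolAR, ENNReal.toReal_mul, ENNReal.toReal_ofReal (by positivity), hVdef]
    have hlamle : lam ≤ lam0 := by
      have hconst : IntegrableOn (fun _ : Pt d => (n : ℝ) * Cb) AR volume :=
        integrableOn_const hARfin.ne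
      have hmono : lam ≤ ∫ _x in AR, (n : ℝ) * Cb := by
        rw [hlamdef]
        exact setIntegral_mono hInt hconst fun x =>
          mul_le_mul_of_nonneg_left (hCb x) (Nat.cast_nonneg n)
      have hval : ∫ _x in AR, (n : ℝ) * Cb = (volume AR).toReal * ((n : ℝ) * Cb) := by
        rw [setIntegral_const, smul_eq_mul]; rfl
      rw [hval, htoReal] at hmono
      calc lam ≤ (n : ℝ)⁻¹ * V * ((n : ℝ) * Cb) := hmono
        _ = Cb * V := by field_simp
        _ = lam0 := hlam0def.symm
    -- events
    have hmuEk : ∀ k : ℕ,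
        μ {ω | (P n ω ∩ AR).ncard = k ∧ (P n ω ∩ AR).Finite} =
          ENNReal.ofReal (Real.exp (-lam) * lam ^ k / (Nat.factorial k)) :=
      fun k => (hP n).counts AR hARmeas hInt k
    have hmuEk' : ∀ k : ℕ,
        μ {ω | (P' n ω ∩ AR).ncard = k ∧ (P' n ω ∩ AR).Finite} =
          ENNReal.ofReal (Real.exp (-lam) * lam ^ k / (Nat.factorial k)) :=
      fun k => (hP' n).counts AR hARmeas hInt k
    set F1 : ℕ → Set Ω :=
      fun k => toMeasurable μ {ω | (P n ω ∩ AR).ncard = k ∧ (P n ω ∩ AR).Finite} with hF1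
    set F2 : ℕ → Set Ω :=
      fun k => toMeasurable μ {ω | (P' n ω ∩ AR).ncard = k ∧ (P' n ω ∩ AR).Finite} with hF2
    set H : Ω → ENNReal := fun ω =>
      (∑' k : ℕ, (F1 k).indicator (fun _ => ENNReal.ofReal (16 * 256 ^ k)) ω) +
      (∑' k : ℕ, (F2 k).indicator (fun _ => ENNReal.ofReal (16 * 256 ^ k)) ω) with hHdef
    have hHmeas : Measurable H := by
      refine Measurable.add ?_ ?_ <;>
        exact Measurable.ennreal_tsum fun k =>
          measurable_const.indicator (measurableSet_toMeasurable _ _)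
    -- lintegral of H
    have hHsum : ∫⁻ ω, H ω ∂μ ≤ ENNReal.ofReal (32 * SS + 256) := by
      have hpiece : ∀ (F : ℕ → Set Ω) (E : ℕ → Set Ω), (∀ k, F k = toMeasurable μ (E k)) →
          (∀ k : ℕ, μ (E k) = ENNReal.ofReal (Real.exp (-lam) * lam ^ k / (Nat.factorial k))) →
          ∫⁻ ω, (∑' k : ℕ, (F k).indicator (fun _ => ENNReal.ofReal (16 * 256 ^ k)) ω) ∂μ
            ≤ ENNReal.ofReal (16 * SS) := by
        intro F E hFE hE
        rw [lintegral_tsum fun k => (measurable_const.indicator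
          (by rw [hFE k]; exact measurableSet_toMeasurable _ _)).aemeasurable]
        have heq : ∀ k : ℕ,
            ∫⁻ ω, (F k).indicator (fun _ => ENNReal.ofReal (16 * 256 ^ k)) ω ∂μ =
              ENNReal.ofReal (16 * 256 ^ k) *
                ENNReal.ofReal (Real.exp (-lam) * lam ^ k / (Nat.factorial k)) := by
          intro k
          rw [hFE k, lintegral_indicator_const (measurableSet_toMeasurable _ _),
            measure_toMeasurable, hE k]
        calc (∑' k : ℕ, ∫⁻ ω, (F k).indicator (fun _ => ENNReal.ofReal (16 * 256 ^ k)) ω ∂μ)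
            = ∑' k : ℕ, ENNReal.ofReal (16 * 256 ^ k) *
                ENNReal.ofReal (Real.exp (-lam) * lam ^ k / (Nat.factorial k)) := by
              exact tsum_congr heq
          _ ≤ ENNReal.ofReal (16 * ∑' k : ℕ, (256 * lam0) ^ k / (Nat.factorial k)) :=
              poisson_series_bound lam lam0 hlamnn hlamle
          _ = ENNReal.ofReal (16 * SS) := by rw [hSSdef]
      have h1 := hpiece F1 _ (fun k => rfl) hmuEk
      have h2 := hpiece F2 _ (fun k => rfl) hmuEk'
      calc ∫⁻ ω, H ω ∂μ
          = (∫⁻ ω, (∑' k : ℕ, (F1 k).indicator (fun _ => ENNReal.ofReal (16 * 256 ^ k)) ω) ∂μ)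
            + ∫⁻ ω, (∑' k : ℕ, (F2 k).indicator (fun _ => ENNReal.ofReal (16 * 256 ^ k)) ω) ∂μ := by
            rw [hHdef]
            exact lintegral_add_left (Measurable.ennreal_tsum fun k =>
              measurable_const.indicator (measurableSet_toMeasurable _ _)) _
        _ ≤ ENNReal.ofReal (16 * SS) + ENNReal.ofReal (16 * SS) := add_le_add h1 h2
        _ = ENNReal.ofReal (32 * SS) := by
            rw [← ENNReal.ofReal_add (by positivity) (by positivity)]; ring_nf
        _ ≤ ENNReal.ofReal (32 * SS + 256) := ENNReal.ofReal_le_ofReal (by linarith)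
    -- good event
    have hcube_meas : MeasurableSet ((cube0 d 1)ᶜ : Set (Pt d)) :=
      (isClosed_cube0 1).measurableSet.compl
    have hcounts := (hP n).counts ((cube0 d 1)ᶜ) hcube_meas
      ((hκI.const_mul _).integrableOn) 0
    have hintzero : ∫ x in ((cube0 d 1)ᶜ : Set (Pt d)), (n : ℝ) * κ x = 0 :=
      setIntegral_eq_zero_of_forall_eq_zero fun x hx => by rw [hκsupp x hx, mul_zero]
    rw [hintzero] at hcounts
    have hmuE : μ {ω | (P n ω ∩ (cube0 d 1)ᶜ).ncard = 0 ∧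
        (P n ω ∩ (cube0 d 1)ᶜ).Finite} = 1 := by
      rw [hcounts]; norm_num
    refine thick_integral_le μ _ (fun ω => by positivity)
      ({ω | (P n ω ∩ (cube0 d 1)ᶜ).ncard = 0 ∧ (P n ω ∩ (cube0 d 1)ᶜ).Finite} ∩
        {ω | (∀ Cc : Set (Pt d), IsCompact Cc → (P n ω ∩ Cc).Finite) ∧
          (∀ Cc : Set (Pt d), IsCompact Cc → (P' n ω ∩ Cc).Finite)})
      {ω | (P n ω ∩ (cube0 d 1)ᶜ).ncard = 0 ∧ (P n ω ∩ (cube0 d 1)ᶜ).Finite}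
      {ω | (∀ Cc : Set (Pt d), IsCompact Cc → (P n ω ∩ Cc).Finite) ∧
          (∀ Cc : Set (Pt d), IsCompact Cc → (P' n ω ∩ Cc).Finite)}
      hmuE ((hP n).locallyFinite.and ((hP' n).locallyFinite))
      (fun ω hω => hω) H hHmeas ?_ _ hC0 hHsum
    -- domination on the good event
    rintro ω ⟨hωE, hωL⟩
    have hPfin : (P n ω).Finite := by
      have h1 : P n ω ∩ (cube0 d 1)ᶜ = ∅ := (Set.ncard_eq_zero hωE.2).1 hωE.1
      have h2 : (P n ω ∩ cube0 d 1).Finite := hωL.1 _ (isCompact_cube0 1)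
      have h3 : P n ω = (P n ω ∩ cube0 d 1) ∪ (P n ω ∩ (cube0 d 1)ᶜ) :=
        (Set.inter_union_compl _ _).symm
      rw [h3, h1, Set.union_empty]
      exact h2
    have hPARfin : (P n ω ∩ AR).Finite := hPfin.subset Set.inter_subset_left
    have hP'ARfin : (P' n ω ∩ AR).Finite := hωL.2 AR hARcpt
    set S : Set (Pt d) := m '' P n ω with hSdef
    set T : Set (Pt d) := m '' P' n ω ∩ cubeQ z with hTdef
    have hSfin : S.Finite := hPfin.image m
    have hTsub : T ⊆ m '' (P' n ω ∩ AR) := by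
      rintro x ⟨hx1, hx2⟩
      rw [hARdef, Set.image_inter_preimage]
      exact ⟨hx1, hQR hx2⟩
    have hTfin : T.Finite := (hP'ARfin.image m).subset hTsub
    have hdet := det_bound Kx hKx q r s hr hrs z S T hSfin hTfin Set.inter_subset_right
    set k : ℕ := (P n ω ∩ AR).ncard with hkdef
    set l : ℕ := (P' n ω ∩ AR).ncard with hldef
    have hωk : ω ∈ F1 k := subset_toMeasurable _ _ ⟨rfl, hPARfin⟩
    have hωl : ω ∈ F2 l := subset_toMeasurable _ _ ⟨rfl, hP'ARfin⟩
    have hmm : ((S ∪ T) ∩ Rset z s).ncard ≤ k + l := by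
      have hSR : S ∩ Rset z s = m '' (P n ω ∩ AR) := by
        rw [hSdef, hARdef, Set.image_inter_preimage]
      have hsub : (S ∪ T) ∩ Rset z s ⊆ (m '' (P n ω ∩ AR)) ∪ (m '' (P' n ω ∩ AR)) := by
        rintro x ⟨hx1 | hx1, hx2⟩
        · exact Or.inl (hSR ▸ Set.mem_inter hx1 hx2)
        · exact Or.inr (hTsub hx1)
      calc ((S ∪ T) ∩ Rset z s).ncard
          ≤ ((m '' (P n ω ∩ AR)) ∪ (m '' (P' n ω ∩ AR))).ncard :=
            Set.ncard_le_ncard hsub ((hPARfin.image m).union (hP'ARfin.image m))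
        _ ≤ (m '' (P n ω ∩ AR)).ncard + (m '' (P' n ω ∩ AR)).ncard :=
            Set.ncard_union_le _ _
        _ ≤ k + l := add_le_add (Set.ncard_image_le hPARfin) (Set.ncard_image_le hP'ARfin)
    have hgb : ((pBettiPts Kx q r s (S ∪ T) : ℝ) - (pBettiPts Kx q r s S : ℝ)) ^ 4
        ≤ 16 * 256 ^ k + 16 * 256 ^ l :=
      pow4_bound _ _ k l hdet hmm
    have hHge : ENNReal.ofReal (16 * 256 ^ k + 16 * 256 ^ l) ≤ H ω := by
      rw [hHdef, ENNReal.ofReal_add (by positivity) (by positivity)]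
      refine add_le_add ?_ ?_
      · calc ENNReal.ofReal (16 * 256 ^ k)
            = (F1 k).indicator (fun _ => ENNReal.ofReal (16 * 256 ^ k)) ω := by
              rw [Set.indicator_of_mem hωk]
          _ ≤ ∑' j : ℕ, (F1 j).indicator (fun _ => ENNReal.ofReal (16 * 256 ^ j)) ω :=
              ENNReal.le_tsum k
      · calc ENNReal.ofReal (16 * 256 ^ l)
            = (F2 l).indicator (fun _ => ENNReal.ofReal (16 * 256 ^ l)) ω := by
              rw [Set.indicator_of_mem hωl]
          _ ≤ ∑' j : ℕ, (F2 j).indicator (fun _ => ENNReal.ofReal (16 * 256 ^ j)) ω :=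
              ENNReal.le_tsum l
    exact le_trans (ENNReal.ofReal_le_ofReal hgb) hHge
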